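/- There are no integers x, y, r with gcd(x, y, r) = 1 such that the sum (x+r)^2 + (x+2r)^2 + ... + (x+8r)^2 of eight squares in arithmetic progression equals y^2. -/

import Mathlib

lemma key16 : ∀ x y r : ZMod 16, 8*x^2 + 72*x*r + 204*r^2 = y^2 →
    (∃ t, x = 2*t) ∧ (∃ t, y = 2*t) ∧ (∃ t, r = 2*t) := by decide

lemma even_of_zmod16 (x : ℤ) (h : ∃ t : ZMod 16, (x : ZMod 16) = 2*t) : (2:ℤ) ∣ x := by
  obtain ⟨t, ht⟩ := h
  have h0 : ((x - 2 * (t.val : ℤ) : ℤ) : ZMod 16) = 0 := by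
    push_cast
    rw [ZMod.natCast_val, ZMod.cast_id, ht]
    ring
  have h16 : (16:ℤ) ∣ (x - 2 * (t.val : ℤ)) :=
    (ZMod.intCast_zmod_eq_zero_iff_dvd _ 16).mp h0
  have h2 : (2:ℤ) ∣ (x - 2 * (t.val : ℤ)) := dvd_trans (by norm_num) h16
  have := dvd_add h2 (Dvd.intro (t.val : ℤ) rfl)
  simpa using this

theorem stmt_4 :
    ¬ ∃ x y r : ℤ, Int.gcd x (Int.gcd y r) = 1 ∧
      ∑ k ∈ Finset.Icc 1 8, (x + (k : ℤ) * r) ^ 2 = y ^ 2 := by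
  rintro ⟨x, y, r, hg, hs⟩
  have heq : 8*x^2 + 72*x*r + 204*r^2 = y^2 := by
    rw [← hs, show (Finset.Icc 1 8 : Finset ℤ) = {1,2,3,4,5,6,7,8} from by decide]
    simp [Finset.sum_insert, Finset.mem_insert]
    ring
  have hz : 8*(x:ZMod 16)^2 + 72*(x:ZMod 16)*(r:ZMod 16) + 204*(r:ZMod 16)^2
      = (y:ZMod 16)^2 := by
    have := congrArg (fun n : ℤ => (n : ZMod 16)) heq
    push_cast at this
    linear_combination this
  obtain ⟨hx, hy, hr⟩ := key16 _ _ _ hz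
  have dx := even_of_zmod16 x hx
  have dy := even_of_zmod16 y hy
  have dr := even_of_zmod16 r hr
  have : (2:ℤ) ∣ (Int.gcd x (Int.gcd y r) : ℤ) :=
    Int.dvd_coe_gcd dx (Int.dvd_coe_gcd dy dr)
  rw [hg] at this
  norm_num at this
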